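/- arXiv:1707.03202 — 2 statements merged into one kernel-verified Lean document; each statement's English description precedes it below -/
import Mathlib

section
/- The jump operation is monotone with respect to strong Weihrauch reducibility: f ≤_sW f′ for every problem f, and f ≤_sW g implies f′ ≤_sW g′. -/
open scoped Classical

/-! ## Basic notions of Weihrauch complexity -/

/-- The finite prefix of length `m` of a point of Baire space, as a list. -/
def pref (p : ℕ → ℕ) (m : ℕ) : List ℕ := List.ofFn (fun i : Fin m => p i)

/-- Type-2 computability of a partial function on Baire space, defined via monotone
computable word functions producing longer and longer prefixes of the output. -/
def BaireComputable (F : (ℕ → ℕ) →. (ℕ → ℕ)) : Prop :=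
  ∃ ψ : List ℕ → List ℕ, Computable ψ ∧
    (∀ u v : List ℕ, u <+: v → ψ u <+: ψ v) ∧
    ∀ p q, q ∈ F p → ∀ n, ∃ m, (ψ (pref p m))[n]? = some (q n)

/-- The interleaving pairing `⟨p,q⟩` on Baire space. -/
def pairB (p q : ℕ → ℕ) : ℕ → ℕ := fun n => if n % 2 = 0 then p (n / 2) else q (n / 2)

def evenPart (r : ℕ → ℕ) : ℕ → ℕ := fun n => r (2 * n)

def oddPart (r : ℕ → ℕ) : ℕ → ℕ := fun n => r (2 * n + 1)

/-- The `i`-th component of the countable tupling `⟨p₀,p₁,…⟩⟨i,k⟩ = pᵢ(k)`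
(using the Cantor pairing). -/
def proj (r : ℕ → ℕ) (i : ℕ) : ℕ → ℕ := fun k => r (Nat.pair i k)

/-- A represented space: a set `X` together with a surjective partial map
from Baire space onto `X`. -/
structure RepSp (X : Type*) where
  δ : (ℕ → ℕ) →. X
  surj : ∀ x : X, ∃ p, x ∈ δ p

theorem mem_part_mk {α : Type*} {D : Prop} {g : D → α} {a : α} (h : D) (e : g h = a) :
    a ∈ Part.mk D g := Part.mem_mk_iff.mpr ⟨h, e⟩

/-- The identity representation of Baire space. -/
def repBaire : RepSp (ℕ → ℕ) where
  δ := fun p => Part.some p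
  surj := fun p => ⟨p, Part.mem_some p⟩

/-- The standard representation of the natural numbers. -/
def repNat : RepSp ℕ where
  δ := fun p => Part.some (p 0)
  surj := fun n => ⟨fun _ => n, Part.mem_some n⟩

/-- `F` is a realizer of the problem `f :⊆ X ⇉ Y` (a problem is a multi-valued
function `f : X → Set Y`, whose domain is the set of `x` with `f x` nonempty). -/
def Realizes {X Y : Type*} (δX : RepSp X) (δY : RepSp Y)
    (f : X → Set Y) (F : (ℕ → ℕ) →. (ℕ → ℕ)) : Prop :=
  ∀ p x, x ∈ δX.δ p → (f x).Nonempty → ∃ q ∈ F p, ∃ y ∈ δY.δ q, y ∈ f x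

/-- Weihrauch reducibility: `f ≤_W g` iff there are computable `H, K` such that
`p ↦ H⟨p, G(K(p))⟩` realizes `f` whenever `G` realizes `g`. -/
def WRed {X Y Z W : Type*} (δX : RepSp X) (δY : RepSp Y) (δZ : RepSp Z) (δW : RepSp W)
    (f : X → Set Y) (g : Z → Set W) : Prop :=
  ∃ H K : (ℕ → ℕ) →. (ℕ → ℕ), BaireComputable H ∧ BaireComputable K ∧
    ∀ G : (ℕ → ℕ) →. (ℕ → ℕ), Realizes δZ δW g G →
      Realizes δX δY f
        (fun p => (K p).bind fun r => (G r).bind fun q => H (pairB p q))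

/-- Strong Weihrauch reducibility: `f ≤_sW g` iff there are computable `H, K`
such that `H ∘ G ∘ K` realizes `f` whenever `G` realizes `g`. -/
def SWRed {X Y Z W : Type*} (δX : RepSp X) (δY : RepSp Y) (δZ : RepSp Z) (δW : RepSp W)
    (f : X → Set Y) (g : Z → Set W) : Prop :=
  ∃ H K : (ℕ → ℕ) →. (ℕ → ℕ), BaireComputable H ∧ BaireComputable K ∧
    ∀ G : (ℕ → ℕ) →. (ℕ → ℕ), Realizes δZ δW g G →
      Realizes δX δY f (fun p => (K p).bind fun r => (G r).bind fun q => H q)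

/-- Weihrauch equivalence. -/
def WEquiv {X Y Z W : Type*} (δX : RepSp X) (δY : RepSp Y) (δZ : RepSp Z) (δW : RepSp W)
    (f : X → Set Y) (g : Z → Set W) : Prop :=
  WRed δX δY δZ δW f g ∧ WRed δZ δW δX δY g f

/-- Strong Weihrauch equivalence. -/
def SWEquiv {X Y Z W : Type*} (δX : RepSp X) (δY : RepSp Y) (δZ : RepSp Z) (δW : RepSp W)
    (f : X → Set Y) (g : Z → Set W) : Prop :=
  SWRed δX δY δZ δW f g ∧ SWRed δZ δW δX δY g f

/-- The identity problem on Baire space. -/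
def idProblem : (ℕ → ℕ) → Set (ℕ → ℕ) := fun p => {p}

/-! ## Constructions on representations and problems -/

/-- Representation of the product of two represented spaces. -/
def prodRep {X Z : Type*} (δX : RepSp X) (δZ : RepSp Z) : RepSp (X × Z) where
  δ := fun r => (δX.δ (evenPart r)).bind fun x => (δZ.δ (oddPart r)).map fun z => (x, z)
  surj := by
    intro xz
    obtain ⟨p, hp⟩ := δX.surj xz.1
    obtain ⟨q, hq⟩ := δZ.surj xz.2
    have he : evenPart (pairB p q) = p := by
      funext n
      have h1 : (2 * n) % 2 = 0 := by omega
      have h2 : (2 * n) / 2 = n := by omega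
      simp [evenPart, pairB, h1, h2]
    have ho : oddPart (pairB p q) = q := by
      funext n
      have h1 : ¬((2 * n + 1) % 2 = 0) := by omega
      have h2 : (2 * n + 1) / 2 = n := by omega
      simp [oddPart, pairB, h1, h2]
    refine ⟨pairB p q, Part.mem_bind_iff.mpr ⟨xz.1, by rw [he]; exact hp,
      (Part.mem_map_iff _).mpr ⟨xz.2, by rw [ho]; exact hq, rfl⟩⟩⟩

/-- The product `f × g` of two problems. -/
def prodProblem {X Y Z W : Type*} (f : X → Set Y) (g : Z → Set W) :
    X × Z → Set (Y × W) :=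
  fun xz => f xz.1 ×ˢ g xz.2

/-- Representation of the disjoint union of two represented spaces. -/
def sumRep {X Z : Type*} (δX : RepSp X) (δZ : RepSp Z) : RepSp (X ⊕ Z) where
  δ := fun r =>
    if r 0 = 0 then (δX.δ fun n => r (n + 1)).map Sum.inl
    else if r 0 = 1 then (δZ.δ fun n => r (n + 1)).map Sum.inr
    else Part.none
  surj := by
    rintro (x | z)
    · obtain ⟨p, hp⟩ := δX.surj x
      refine ⟨fun n => Nat.casesOn n 0 p, ?_⟩
      show Sum.inl x ∈ (δX.δ p).map Sum.inl
      exact (Part.mem_map_iff _).mpr ⟨x, hp, rfl⟩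
    · obtain ⟨p, hp⟩ := δZ.surj z
      refine ⟨fun n => Nat.casesOn n 1 p, ?_⟩
      show Sum.inr z ∈ (δZ.δ p).map Sum.inr
      exact (Part.mem_map_iff _).mpr ⟨z, hp, rfl⟩

/-- The coproduct `f ⊔ g` of two problems. -/
def coprodProblem {X Y Z W : Type*} (f : X → Set Y) (g : Z → Set W) :
    X ⊕ Z → Set (Y ⊕ W)
  | Sum.inl x => Sum.inl '' f x
  | Sum.inr z => Sum.inr '' g z

/-- The meet `f ⊓ g` of two problems. -/
def meetProblem {X Y Z W : Type*} (f : X → Set Y) (g : Z → Set W) :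
    X × Z → Set (Y ⊕ W) :=
  fun xz => Sum.inl '' f xz.1 ∪ Sum.inr '' g xz.2

/-- Representation of the space of sequences `X^ℕ` via the countable tupling. -/
noncomputable def seqRep {X : Type*} (δX : RepSp X) : RepSp (ℕ → X) where
  δ := fun r => Part.mk (∀ i : ℕ, ∃ x, x ∈ δX.δ (proj r i))
    (fun h i => Classical.choose (h i))
  surj := by
    intro x
    choose p hp using fun i => δX.surj (x i)
    refine ⟨fun m => p (Nat.unpair m).1 (Nat.unpair m).2, ?_⟩
    have hproj : ∀ i, proj (fun m => p (Nat.unpair m).1 (Nat.unpair m).2) i = p i := by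
      intro i; funext k; simp [proj]
    have hdom : ∀ i : ℕ, ∃ y, y ∈ δX.δ (proj (fun m => p (Nat.unpair m).1 (Nat.unpair m).2) i) :=
      fun i => ⟨x i, by rw [hproj i]; exact hp i⟩
    refine mem_part_mk hdom ?_
    funext i
    exact Part.mem_unique (Classical.choose_spec (hdom i)) (by rw [hproj i]; exact hp i)

/-- The parallelization `f̂` of a problem. -/
def parallelProblem {X Y : Type*} (f : X → Set Y) : (ℕ → X) → Set (ℕ → Y) :=
  fun x => {y | ∀ i, y i ∈ f (x i)}

/-- Representation of the finite power `Xⁿ` via the countable tupling. -/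
noncomputable def finProdRep (n : ℕ) {X : Type*} (δX : RepSp X) : RepSp (Fin n → X) where
  δ := fun r => Part.mk (∀ i : Fin n, ∃ x, x ∈ δX.δ (proj r i))
    (fun h i => Classical.choose (h i))
  surj := by
    intro x
    choose p hp using fun i => δX.surj (x i)
    classical
    refine ⟨fun m => if h : (Nat.unpair m).1 < n then p ⟨_, h⟩ (Nat.unpair m).2 else 0, ?_⟩
    have hproj : ∀ i : Fin n,
        proj (fun m => if h : (Nat.unpair m).1 < n then p ⟨_, h⟩ (Nat.unpair m).2 else 0) i
          = p i := by
      intro i; funext k; simp [proj, i.isLt]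
    have hdom : ∀ i : Fin n, ∃ y, y ∈ δX.δ
        (proj (fun m => if h : (Nat.unpair m).1 < n then p ⟨_, h⟩ (Nat.unpair m).2 else 0) i) :=
      fun i => ⟨x i, by rw [hproj i]; exact hp i⟩
    refine mem_part_mk hdom ?_
    funext i
    exact Part.mem_unique (Classical.choose_spec (hdom i)) (by rw [hproj i]; exact hp i)

/-- The `n`-fold product `fⁿ` of a problem with itself. -/
def finProdProblem (n : ℕ) {X Y : Type*} (f : X → Set Y) :
    (Fin n → X) → Set (Fin n → Y) :=
  fun x => {y | ∀ i, y i ∈ f (x i)}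

/-- Representation of the space `X*` of words over `X`. -/
noncomputable def starRep {X : Type*} (δX : RepSp X) : RepSp (Σ n : ℕ, Fin n → X) where
  δ := fun r => Part.mk (∀ i : Fin (r 0), ∃ x, x ∈ δX.δ (proj (fun m => r (m + 1)) i))
    (fun h => ⟨r 0, fun i => Classical.choose (h i)⟩)
  surj := by
    rintro ⟨n, x⟩
    choose p hp using fun i => δX.surj (x i)
    classical
    have hproj : ∀ i : Fin n,
        proj (fun m' => if h : (Nat.unpair m').1 < n then p ⟨_, h⟩ (Nat.unpair m').2 else 0) i
          = p i := by
      intro i; funext k; simp [proj, i.isLt]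
    have hdom : ∀ i : Fin n, ∃ y, y ∈ δX.δ
        (proj (fun m' => if h : (Nat.unpair m').1 < n then p ⟨_, h⟩ (Nat.unpair m').2 else 0) i) :=
      fun i => ⟨x i, by rw [hproj i]; exact hp i⟩
    refine ⟨fun m => Nat.casesOn m n
      (fun m' => if h : (Nat.unpair m').1 < n then p ⟨_, h⟩ (Nat.unpair m').2 else 0),
      Part.mem_mk_iff.mpr ⟨hdom, ?_⟩⟩
    have hx : (fun i : Fin n => Classical.choose (hdom i)) = x := funext fun i =>
      Part.mem_unique (Classical.choose_spec (hdom i)) (by rw [hproj i]; exact hp i)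
    exact congrArg (Sigma.mk n) hx

/-- The finite parallelization `f*` of a problem. -/
def starProblem {X Y : Type*} (f : X → Set Y) :
    (Σ n : ℕ, Fin n → X) → Set (Σ n : ℕ, Fin n → Y) :=
  fun x => {y | ∃ e : x.1 = y.1, ∀ i : Fin x.1, y.2 (Fin.cast e i) ∈ f (x.2 i)}

/-- Representation of a countable disjoint union of represented spaces. -/
def csumRep {Z : ℕ → Type*} (δZ : ∀ i, RepSp (Z i)) : RepSp (Σ i, Z i) where
  δ := fun r => ((δZ (r 0)).δ (fun n => r (n + 1))).map fun z => ⟨r 0, z⟩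
  surj := by
    rintro ⟨i, z⟩
    obtain ⟨p, hp⟩ := (δZ i).surj z
    exact ⟨fun n => Nat.casesOn n i p, (Part.mem_map_iff _).mpr ⟨z, hp, rfl⟩⟩

/-- The countable coproduct `⊔ᵢ gᵢ` of a sequence of problems. -/
def csumProblem {Z W : ℕ → Type*} (g : ∀ i, Z i → Set (W i)) :
    (Σ i, Z i) → Set (Σ i, W i) :=
  fun x => Sigma.mk x.1 '' g x.1 x.2

/-! ## Limits and jumps -/

/-- The limit map on Baire space, as a (single-valued) problem:
`lim⟨p₀,p₁,…⟩` is the pointwise limit of the sequence `(pₙ)ₙ`. -/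
def limProblem : (ℕ → ℕ) → Set (ℕ → ℕ) :=
  fun r => {q | ∀ n, ∃ N, ∀ m, N ≤ m → proj r m n = q n}

/-- The limit map on Baire space as a partial (single-valued) function. -/
noncomputable def limP : (ℕ → ℕ) →. (ℕ → ℕ) :=
  fun r => Part.mk (∀ n, ∃ N, ∀ m, N ≤ m → proj r m n = proj r N n)
    (fun h n => proj r (Classical.choose (h n)) n)

/-- The jump `(X′, δ′)` of a represented space: `δ′ := δ ∘ lim`. -/
noncomputable def jumpRep {X : Type*} (δ : RepSp X) : RepSp X where
  δ := fun p => (limP p).bind δ.δ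
  surj := by
    intro x
    obtain ⟨p, hp⟩ := δ.surj x
    refine ⟨fun m => p (Nat.unpair m).2, Part.mem_bind_iff.mpr ⟨p, ?_, hp⟩⟩
    have hproj : ∀ m, proj (fun m => p (Nat.unpair m).2) m = p := by
      intro m; funext k; simp [proj]
    have hdom : ∀ n, ∃ N, ∀ m, N ≤ m →
        proj (fun m => p (Nat.unpair m).2) m n = proj (fun m => p (Nat.unpair m).2) N n :=
      fun n => ⟨0, fun m _ => by rw [hproj m, hproj 0]⟩
    refine mem_part_mk hdom ?_
    funext n
    rw [hproj]

/-! ## Choice problems -/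

/-- The representation of subsets of `ℕ` by enumerations of their complements:
`p` is a name of `A` iff `p` enumerates (via `p m = n + 1`) exactly the `n ∉ A`. -/
def enumNegRep : RepSp (Set ℕ) where
  δ := fun p => Part.some {n | ∀ m, p m ≠ n + 1}
  surj := by
    intro S
    by_cases h : Sᶜ.Nonempty
    · obtain ⟨f, hf⟩ := (Set.to_countable Sᶜ).exists_eq_range h
      refine ⟨fun m => f m + 1, Part.mem_some_iff.mpr ?_⟩
      ext n
      simp only [Set.mem_setOf_eq]
      constructor
      · intro hn m hm
        have hfm : f m ∈ Sᶜ := by rw [hf]; exact ⟨m, rfl⟩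
        have hfmn : f m = n := by omega
        rw [hfmn] at hfm
        exact hfm hn
      · intro hn
        by_contra hS
        have hmem : n ∈ Sᶜ := hS
        rw [hf] at hmem
        obtain ⟨m, hm⟩ := hmem
        exact hn m (by omega)
    · refine ⟨fun _ => 0, Part.mem_some_iff.mpr ?_⟩
      have hS : S = Set.univ := by
        rw [← compl_compl S, Set.not_nonempty_iff_eq_empty.mp h, Set.compl_empty]
      rw [hS]
      ext n
      simp

/-- Choice on the natural numbers: given (a name of) a nonempty set `A ⊆ ℕ`,
find an element of `A`. -/
def CNat : Set ℕ → Set ℕ := fun A => A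

/-- Choice on the finite set `{0, …, k-1}`. -/
def CFin (k : ℕ) : Set ℕ → Set ℕ := fun A => {n | n ∈ A ∧ A ⊆ Set.Iio k}

/-- The limited principle of omniscience as a problem. -/
noncomputable def LPOProblem : (ℕ → ℕ) → Set ℕ :=
  fun p => {if ∃ k, p k = 0 then 1 else 0}


/-- Restriction of a problem on Baire space to a set `A`. -/
def restrictProblem (F : (ℕ → ℕ) → Set (ℕ → ℕ)) (A : Set (ℕ → ℕ)) :
    (ℕ → ℕ) → Set (ℕ → ℕ) :=
  fun p => {q | q ∈ F p ∧ p ∈ A}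

/-- A problem is a fractal if it has a representative on Baire space all of whose
restrictions to clopen sets meeting its domain are Weihrauch equivalent to it. -/
def Fractal {X Y : Type*} (δX : RepSp X) (δY : RepSp Y) (f : X → Set Y) : Prop :=
  ∃ F : (ℕ → ℕ) → Set (ℕ → ℕ),
    WEquiv repBaire repBaire δX δY F f ∧
    ∀ A : Set (ℕ → ℕ), IsClopen A → (A ∩ {p | (F p).Nonempty}).Nonempty →
      WEquiv repBaire repBaire repBaire repBaire (restrictProblem F A) F

/-- A problem `f` is densely realized if for every name `p` of an admissible instance
the set of names of solutions is dense in the domain of the output representation. -/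
def DenselyRealized {X Y : Type*} (δX : RepSp X) (δY : RepSp Y) (f : X → Set Y) : Prop :=
  ∀ p, ∀ x ∈ δX.δ p, (f x).Nonempty →
    {q : ℕ → ℕ | (δY.δ q).Dom} ⊆ closure {q : ℕ → ℕ | ∃ y ∈ δY.δ q, y ∈ f x}

/-- Turing reducibility on Baire space: `a` is computable from `b`. -/
def TRed (a b : ℕ → ℕ) : Prop := ∃ F, BaireComputable F ∧ a ∈ F b

/-- The two-point space `{p, q}` represented by the identity. -/
def pqRep (p q : ℕ → ℕ) : RepSp {r : ℕ → ℕ // r = p ∨ r = q} where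
  δ := fun r => Part.mk (r = p ∨ r = q) (fun h => ⟨r, h⟩)
  surj := fun x => ⟨x.1, Part.mem_mk_iff.mpr ⟨x.2, rfl⟩⟩

/-- The problem `m_A` associated with a set `A ⊆ ℕ`. -/
noncomputable def mProblem (p q : ℕ → ℕ) (A : Set ℕ) :
    ℕ → Set {r : ℕ → ℕ // r = p ∨ r = q} :=
  fun n => {y | y.1 = if n ∈ A then p else q}

/-- The join `A ⊕ B` of two sets of natural numbers. -/
def mJoin (A B : Set ℕ) : Set ℕ :=
  {k | (k % 2 = 0 ∧ k / 2 ∈ A) ∨ (k % 2 = 1 ∧ k / 2 ∈ B)}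

/-- The cardinality `#f` of a problem: the supremum of the cardinalities of sets
`M ⊆ dom f` whose images under `f` are pairwise disjoint. -/
noncomputable def problemCard {X Y : Type} (f : X → Set Y) : Cardinal :=
  sSup {c | ∃ M : Set X, (∀ x ∈ M, (f x).Nonempty) ∧ M.PairwiseDisjoint f ∧
    c = Cardinal.mk M}

/-- Computability of a problem: it has a computable realizer. -/
def ComputableProblem {X Y : Type*} (δX : RepSp X) (δY : RepSp Y) (f : X → Set Y) : Prop :=
  ∃ F, BaireComputable F ∧ Realizes δX δY f F

/-- The minimum function on Baire space. -/
def minProblem : (ℕ → ℕ) → Set ℕ :=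
  fun p => {n | n ∈ Set.range p ∧ ∀ m, n ≤ p m}

/-- The complementary minimum function `minᶜ`. -/
def mincProblem : (ℕ → ℕ) → Set ℕ :=
  fun p => {n | (∀ m, p m ≠ n) ∧ ∀ j, j < n → ∃ m, p m = j}

/-- The maximum function on Baire space (defined on bounded sequences). -/
def maxProblem : (ℕ → ℕ) → Set ℕ :=
  fun p => {n | n ∈ Set.range p ∧ ∀ m, p m ≤ n}

/-! ### Auxiliary material for `jump_monotone` -/

section JumpMonotoneAux

lemma prefix_getElem?_some {α : Type*} {l₁ l₂ : List α} (h : l₁ <+: l₂) {n : ℕ} {a : α}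
    (h2 : l₁[n]? = some a) : l₂[n]? = some a := by
  obtain ⟨t, rfl⟩ := h
  have hn : n < l₁.length := by
    by_contra hn
    rw [List.getElem?_eq_none (le_of_not_gt hn)] at h2
    exact absurd h2 (by simp)
  rw [List.getElem?_append, if_pos hn]
  exact h2

lemma pref_length (p : ℕ → ℕ) (m : ℕ) : (pref p m).length = m := by simp [pref]

lemma pref_eq_map_range (p : ℕ → ℕ) (m : ℕ) : pref p m = (List.range m).map p := by
  apply List.ext_getElem
  · simp [pref]
  · intro i h1 h2
    simp [pref]

lemma pref_getElem? {n m : ℕ} (h : n < m) (p : ℕ → ℕ) : (pref p m)[n]? = some (p n) := by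
  rw [pref_eq_map_range, List.getElem?_map, List.getElem?_range h]
  rfl

lemma pref_getD {n m : ℕ} (h : n < m) (p : ℕ → ℕ) : (pref p m).getD n 0 = p n := by
  rw [List.getD_eq_getElem?_getD, pref_getElem? h]
  rfl

lemma prefix_getD {l₁ l₂ : List ℕ} (h : l₁ <+: l₂) {n : ℕ} (hn : n < l₁.length) :
    l₁.getD n 0 = l₂.getD n 0 := by
  rw [List.getD_eq_getElem?_getD, List.getD_eq_getElem?_getD,
    prefix_getElem?_some h (List.getElem?_eq_getElem hn), List.getElem?_eq_getElem hn]

lemma range_prefix_range {m m' : ℕ} (h : m ≤ m') : List.range m <+: List.range m' := by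
  have hh : (List.range m').take m = List.range m := by
    rw [List.take_range, min_eq_left h]
  rw [← hh]
  exact List.take_prefix _ _

lemma pref_prefix (p : ℕ → ℕ) {m m' : ℕ} (h : m ≤ m') : pref p m <+: pref p m' := by
  rw [pref_eq_map_range, pref_eq_map_range]
  exact (range_prefix_range h).map p

/-- The key combinator: a total function on Baire space computed by a computable
"local rule" `v` with modulus `b` is type-2 computable. -/
theorem bc_of_local {h : (ℕ → ℕ) → (ℕ → ℕ)} {b : ℕ → ℕ} {v : List ℕ → ℕ → ℕ}
    (hb : Computable b) (hv : Computable₂ v) (hgt : ∀ n, n < b n)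
    (hagree : ∀ u w n, u <+: w → b n ≤ u.length → v u n = v w n)
    (hval : ∀ p n, v (pref p (b n)) n = h p n) :
    BaireComputable (fun p => Part.some (h p)) := by
  classical
  have hex : ∀ u : List ℕ, ∃ n, u.length < b n := fun u => ⟨u.length, hgt _⟩
  set c : List ℕ → ℕ := fun u => Nat.find (hex u) with hcdef
  have hfact : ∀ u : List ℕ, ∀ i, i < c u → b i ≤ u.length := by
    intro u i hi
    have := (Nat.lt_find_iff (hex u) i).mp hi i le_rfl
    omega
  have hcle : ∀ u : List ℕ, c u ≤ u.length := fun u => Nat.find_le (hgt _)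
  have hcmono : ∀ u w : List ℕ, u <+: w → c u ≤ c w := by
    intro u w huw
    refine (Nat.le_find_iff (hex w) _).mpr fun i hi => ?_
    have h1 := hfact u i hi
    have h2 := huw.length_le
    omega
  set ψ : List ℕ → List ℕ := fun u => (List.range (c u)).map (v u) with hψdef
  have hψtake : ∀ u w : List ℕ, u <+: w → ψ u = (ψ w).take (c u) := by
    intro u w huw
    show (List.range (c u)).map (v u) = ((List.range (c w)).map (v w)).take (c u)
    rw [← List.map_take, List.take_range, min_eq_left (hcmono u w huw)]
    refine List.map_congr_left fun i hi => ?_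
    exact hagree u w i huw (hfact u i (List.mem_range.mp hi))
  -- computability of `c`
  have hcc : Computable c := by
    have step : ∀ (u : List ℕ) (k : ℕ),
        (Nat.rec 0 (fun _ r => if u.length < b r then r else r + 1) k : ℕ)
          = min (c u) k := by
      intro u k
      induction k with
      | zero => simp
      | succ k ih =>
        rw [show (Nat.rec 0 (fun _ r => if u.length < b r then r else r + 1) (k+1) : ℕ)
            = (if u.length < b (Nat.rec 0 (fun _ r => if u.length < b r then r else r + 1) k : ℕ)
              then (Nat.rec 0 (fun _ r => if u.length < b r then r else r + 1) k : ℕ)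
              else (Nat.rec 0 (fun _ r => if u.length < b r then r else r + 1) k : ℕ) + 1) from rfl,
          ih]
        rcases le_or_gt (c u) k with hck | hck
        · rw [min_eq_left hck, if_pos (Nat.find_spec (hex u)), min_eq_left (by omega)]
        · rw [min_eq_right (by omega), if_neg (Nat.find_min (hex u) hck)]
          omega
    have hrec : Computable fun u : List ℕ =>
        (Nat.rec 0 (fun y IH => if u.length < b IH then IH else IH + 1) (u.length + 1) : ℕ) := by
      have hf : Computable fun u : List ℕ => u.length + 1 :=
        (Primrec.succ.comp Primrec.list_length).to_comp
      have hg : Computable fun _ : List ℕ => (0 : ℕ) := Computable.const 0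
      have hcond : Computable fun x : List ℕ × (ℕ × ℕ) => decide (x.1.length < b x.2.2) :=
        Primrec.nat_lt.decide.to_comp.comp
          (Primrec.list_length.to_comp.comp Computable.fst)
          (hb.comp (Computable.snd.comp Computable.snd))
      have hh : Computable₂ fun (u : List ℕ) (x : ℕ × ℕ) =>
          if u.length < b x.2 then x.2 else x.2 + 1 := by
        have := Computable.cond hcond
          (Computable.snd.comp Computable.snd)
          (Primrec.succ.to_comp.comp (Computable.snd.comp Computable.snd))
        exact this.of_eq fun x => by
          rcases Nat.lt_or_ge x.1.length (b x.2.2) with hlt | hge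
          · simp [hlt]
          · simp [Nat.not_lt.mpr hge, Nat.not_lt.mpr hge]
      exact (Computable.nat_rec hf hg hh).of_eq fun u => rfl
    refine hrec.of_eq fun u => ?_
    rw [step u (u.length + 1), min_eq_left (by have := hcle u; omega)]
  -- computability of `ψ`
  have hψc : Computable ψ := by
    have hrec : Computable fun u : List ℕ =>
        (Nat.rec ([] : List ℕ) (fun y IH => IH ++ [v u y]) (c u) : List ℕ) := by
      have hh : Computable₂ fun (u : List ℕ) (x : ℕ × List ℕ) => x.2 ++ [v u x.1] :=
        Computable.list_concat.comp (Computable.snd.comp Computable.snd)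
          (hv.comp Computable.fst (Computable.fst.comp Computable.snd))
      exact (Computable.nat_rec hcc (Computable.const ([] : List ℕ)) hh).of_eq fun u => rfl
    refine hrec.of_eq fun u => ?_
    show (Nat.rec ([] : List ℕ) (fun y IH => IH ++ [v u y]) (c u) : List ℕ)
      = (List.range (c u)).map (v u)
    induction c u with
    | zero => simp
    | succ k ih => rw [List.range_succ, List.map_append]; simpa using congrArg (· ++ [v u k]) ih
  refine ⟨ψ, hψc, ?_, ?_⟩
  · intro u w huw
    rw [hψtake u w huw]
    exact List.take_prefix _ _
  · intro p q hq n
    have hq' : q = h p := Part.mem_some_iff.mp hq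
    subst hq'
    refine ⟨(Finset.range (n + 1)).sup b, ?_⟩
    set m := (Finset.range (n + 1)).sup b with hm
    have hbn : ∀ i, i ≤ n → b i ≤ m :=
      fun i hi => Finset.le_sup (Finset.mem_range.mpr (by omega))
    have hnc : n < c (pref p m) := by
      refine (Nat.lt_find_iff (hex (pref p m)) n).mpr fun i hi => ?_
      rw [pref_length]
      exact Nat.not_lt.mpr (hbn i hi)
    have : (ψ (pref p m))[n]? = some (v (pref p m) n) := by
      show ((List.range (c (pref p m))).map (v (pref p m)))[n]? = _
      rw [List.getElem?_map, List.getElem?_range hnc]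
      rfl
    rw [this]
    congr 1
    rw [← hval p n]
    exact (hagree (pref p (b n)) (pref p m) n
      (pref_prefix p (hbn n le_rfl)) (by rw [pref_length])).symm

/-- The identity on Baire space is type-2 computable. -/
lemma idBC : BaireComputable (fun p : ℕ → ℕ => Part.some p) := by
  refine bc_of_local (b := fun n => n + 1) (v := fun u n => u.getD n 0)
    Primrec.succ.to_comp ((Primrec.list_getD 0).to_comp) (fun n => Nat.lt_succ_self n)
    ?_ ?_
  · intro u w n huw hle
    have hle' : n + 1 ≤ u.length := hle
    exact prefix_getD huw (by omega)
  · intro p n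
    exact pref_getD (Nat.lt_succ_self n) p

/-- The constant tupling `s ↦ ⟨s,s,s,…⟩` is type-2 computable. -/
lemma ctBC : BaireComputable (fun p : ℕ → ℕ => Part.some (fun m => p m.unpair.2)) := by
  refine bc_of_local (b := fun m => m + m.unpair.2 + 1) (v := fun u m => u.getD m.unpair.2 0)
    ?_ ?_ (fun n => Nat.lt_succ_of_le (Nat.le_add_right _ _)) ?_ ?_
  · exact (Primrec.succ.comp ((Primrec.nat_add).comp .id
      (Primrec.snd.comp Primrec.unpair))).to_comp
  · exact ((Primrec.list_getD 0).comp Primrec.fst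
      (Primrec.snd.comp (Primrec.unpair.comp Primrec.snd))).to_comp
  · intro u w n huw hle
    have hle' : n + n.unpair.2 + 1 ≤ u.length := hle
    exact prefix_getD huw (by omega)
  · intro p m
    exact pref_getD (Nat.lt_succ_of_le (Nat.le_add_left _ _)) p

lemma ct_mem_limP (s : ℕ → ℕ) : s ∈ limP (fun m => s m.unpair.2) := by
  have hproj : ∀ i, proj (fun m => s m.unpair.2) i = s := by
    intro i; funext k; simp [proj]
  have hdom : ∀ n, ∃ N, ∀ m, N ≤ m →
      proj (fun m => s m.unpair.2) m n = proj (fun m => s m.unpair.2) N n :=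
    fun n => ⟨0, fun m _ => by rw [hproj m, hproj 0]⟩
  refine mem_part_mk hdom ?_
  funext n
  rw [hproj]

lemma limP_spec {p' p : ℕ → ℕ} (h : p ∈ limP p') :
    ∀ n, ∃ N, ∀ m, N ≤ m → proj p' m n = p n := by
  rw [limP, Part.mem_mk_iff] at h
  obtain ⟨hd, he⟩ := h
  intro n
  refine ⟨Classical.choose (hd n), fun m hm => ?_⟩
  have := Classical.choose_spec (hd n) m hm
  rw [← he]
  exact this

lemma mem_limP {r' q : ℕ → ℕ} (h : ∀ n, ∃ N, ∀ m, N ≤ m → proj r' m n = q n) :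
    q ∈ limP r' := by
  have hdom : ∀ n, ∃ N, ∀ m, N ≤ m → proj r' m n = proj r' N n := by
    intro n
    obtain ⟨N, hN⟩ := h n
    exact ⟨N, fun m hm => (hN m hm).trans (hN N le_rfl).symm⟩
  refine mem_part_mk hdom ?_
  funext n
  obtain ⟨N, hN⟩ := h n
  have hc := Classical.choose_spec (hdom n) (max N (Classical.choose (hdom n)))
    (le_max_right _ _)
  have h2 := hN (max N (Classical.choose (hdom n))) (le_max_left _ _)
  rw [← hc, h2]

lemma pair_le_diag {a b m : ℕ} (ha : a ≤ m) (hb : b ≤ m) : Nat.pair a b ≤ Nat.pair m m := by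
  have hmm : Nat.pair m m = m * m + m + m := by
    simp [Nat.pair]
  rcases Nat.lt_or_ge a b with hab | hab
  · have : Nat.pair a b = b * b + a := by simp [Nat.pair, hab]
    rw [this, hmm]
    have := Nat.mul_le_mul hb hb
    omega
  · have : Nat.pair a b = a * a + a + b := by simp [Nat.pair, Nat.not_lt.mpr hab]
    rw [this, hmm]
    have := Nat.mul_le_mul ha ha
    omega

/-- The "jump lift" of a word function: it applies the word function to longer and longer
prefixes of the components of a convergent sequence. -/
def KjF (ψK : List ℕ → List ℕ) (r : ℕ → ℕ) : ℕ → ℕ :=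
  fun m => ((ψK (pref (proj r m.unpair.1) m.unpair.1))[m.unpair.2]?).getD 0

lemma KjBC {ψK : List ℕ → List ℕ} (hc : Computable ψK) :
    BaireComputable (fun r => Part.some (KjF ψK r)) := by
  refine bc_of_local (b := fun m => m + Nat.pair m m + 1)
    (v := fun u m => ((ψK ((List.range m.unpair.1).map
      (fun k => u.getD (Nat.pair m.unpair.1 k) 0)))[m.unpair.2]?).getD 0)
    ?_ ?_ (fun n => Nat.lt_succ_of_le (Nat.le_add_right _ _)) ?_ ?_
  · exact (Primrec.succ.comp ((Primrec.nat_add).comp .id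
      (Primrec₂.natPair.comp .id .id))).to_comp
  · -- computability of the local rule
    have hL : Primrec fun x : List ℕ × ℕ => (List.range x.2.unpair.1).map
        (fun k => x.1.getD (Nat.pair x.2.unpair.1 k) 0) := by
      refine Primrec.list_map (Primrec.list_range.comp
        (Primrec.fst.comp (Primrec.unpair.comp Primrec.snd))) ?_
      exact (Primrec.list_getD 0).comp₂ (Primrec.fst.comp Primrec.fst).to₂
        (Primrec₂.natPair.comp₂
          ((Primrec.fst.comp (Primrec.unpair.comp (Primrec.snd.comp Primrec.fst))).to₂)
          Primrec.snd.to₂)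
    have h1 : Computable fun x : List ℕ × ℕ => ψK ((List.range x.2.unpair.1).map
        (fun k => x.1.getD (Nat.pair x.2.unpair.1 k) 0)) := hc.comp hL.to_comp
    have h2 : Computable fun x : List ℕ × ℕ =>
        (ψK ((List.range x.2.unpair.1).map
          (fun k => x.1.getD (Nat.pair x.2.unpair.1 k) 0)))[x.2.unpair.2]? :=
      Primrec.list_getElem?.to_comp.comp h1
        (Primrec.snd.comp (Primrec.unpair.comp Primrec.snd)).to_comp
    exact (Primrec.option_getD.to_comp.comp h2 (Computable.const 0) : _)
  · intro u w m huw hle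
    have hle' : m + Nat.pair m m + 1 ≤ u.length := hle
    show ((ψK ((List.range m.unpair.1).map
      (fun k => u.getD (Nat.pair m.unpair.1 k) 0)))[m.unpair.2]?).getD 0
      = ((ψK ((List.range m.unpair.1).map
      (fun k => w.getD (Nat.pair m.unpair.1 k) 0)))[m.unpair.2]?).getD 0
    have hlw : (List.range m.unpair.1).map (fun k => u.getD (Nat.pair m.unpair.1 k) 0)
        = (List.range m.unpair.1).map (fun k => w.getD (Nat.pair m.unpair.1 k) 0) := by
      refine List.map_congr_left fun k hk => ?_
      have hk' : k < m.unpair.1 := List.mem_range.mp hk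
      have hpk : Nat.pair m.unpair.1 k ≤ Nat.pair m m :=
        pair_le_diag (Nat.unpair_left_le m) (by have := Nat.unpair_left_le m; omega)
      exact prefix_getD huw (by omega)
    rw [hlw]
  · intro r m
    show ((ψK ((List.range m.unpair.1).map
      (fun k => (pref r (m + Nat.pair m m + 1)).getD (Nat.pair m.unpair.1 k) 0)))[m.unpair.2]?).getD 0
      = KjF ψK r m
    have hlist : (List.range m.unpair.1).map
        (fun k => (pref r (m + Nat.pair m m + 1)).getD (Nat.pair m.unpair.1 k) 0)
        = pref (proj r m.unpair.1) m.unpair.1 := by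
      rw [pref_eq_map_range (proj r m.unpair.1) m.unpair.1]
      refine List.map_congr_left fun k hk => ?_
      have hk' : k < m.unpair.1 := List.mem_range.mp hk
      have hpk : Nat.pair m.unpair.1 k ≤ Nat.pair m m :=
        pair_le_diag (Nat.unpair_left_le m) (by have := Nat.unpair_left_le m; omega)
      rw [pref_getD (by omega) r]
      rfl
    rw [hlist]
    rfl

lemma Kj_lim {ψK : List ℕ → List ℕ} (hm : ∀ u v, u <+: v → ψK u <+: ψK v)
    {p' p r : ℕ → ℕ}
    (hp : ∀ n, ∃ N, ∀ m, N ≤ m → proj p' m n = p n)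
    (hr : ∀ n, ∃ m, (ψK (pref p m))[n]? = some (r n)) :
    ∀ n, ∃ N, ∀ i, N ≤ i → proj (KjF ψK p') i n = r n := by
  intro n
  obtain ⟨m₀, hm₀⟩ := hr n
  choose Nf hNf using hp
  refine ⟨max m₀ ((Finset.range m₀).sup Nf), fun i hi => ?_⟩
  have him₀ : m₀ ≤ i := le_trans (le_max_left _ _) hi
  have hpre : pref p m₀ <+: pref (proj p' i) i := by
    have h1 : pref p m₀ = (List.range m₀).map (proj p' i) := by
      rw [pref_eq_map_range]
      refine List.map_congr_left fun j hj => ?_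
      have hj' : j < m₀ := List.mem_range.mp hj
      exact (hNf j i (le_trans (le_trans (Finset.le_sup (Finset.mem_range.mpr hj'))
        (le_max_right _ _)) hi)).symm
    rw [h1, pref_eq_map_range]
    exact (range_prefix_range him₀).map _
  have hsub := prefix_getElem?_some (hm _ _ hpre) hm₀
  show ((ψK (pref (proj p' ((Nat.pair i n).unpair.1)) ((Nat.pair i n).unpair.1)))[(Nat.pair i n).unpair.2]?).getD 0 = r n
  rw [Nat.unpair_pair]
  simp only
  rw [hsub]
  rfl

lemma canon_ex {Z W : Type*} (δZ : RepSp Z) (δW : RepSp W) (g : Z → Set W) (s : ℕ → ℕ)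
    (hz : ∃ z ∈ δZ.δ s, (g z).Nonempty) :
    ∃ q : ℕ → ℕ, ∃ w ∈ δW.δ q, w ∈ g (Classical.choose hz) := by
  obtain ⟨w, hw⟩ := (Classical.choose_spec hz).2
  obtain ⟨q, hq⟩ := δW.surj w
  exact ⟨q, w, hq, hw⟩

/-- A canonical (non-computable) realizer of any problem. -/
noncomputable def canonG {Z W : Type*} (δZ : RepSp Z) (δW : RepSp W) (g : Z → Set W) :
    (ℕ → ℕ) →. (ℕ → ℕ) :=
  fun s => Part.mk (∃ z ∈ δZ.δ s, (g z).Nonempty)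
    (fun hz => Classical.choose (canon_ex δZ δW g s hz))

lemma canonG_realizes {Z W : Type*} (δZ : RepSp Z) (δW : RepSp W) (g : Z → Set W) :
    Realizes δZ δW g (canonG δZ δW g) := by
  intro s z hz hne
  have hd : ∃ z' ∈ δZ.δ s, (g z').Nonempty := ⟨z, hz, hne⟩
  refine ⟨Classical.choose (canon_ex δZ δW g s hd), mem_part_mk hd rfl, ?_⟩
  obtain ⟨w, hq, hw⟩ := Classical.choose_spec (canon_ex δZ δW g s hd)
  have he : Classical.choose hd = z := Part.mem_unique (Classical.choose_spec hd).1 hz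
  exact ⟨w, hq, he ▸ hw⟩

end JumpMonotoneAux

/-- the jump is monotone with respect to `≤_sW`. -/
theorem jump_monotone (X Y Z W : Type) (δX : RepSp X) (δY : RepSp Y)
    (δZ : RepSp Z) (δW : RepSp W) (f : X → Set Y) (g : Z → Set W) :
    SWRed δX δY (jumpRep δX) δY f f ∧
    (SWRed δX δY δZ δW f g → SWRed (jumpRep δX) δY (jumpRep δZ) δW f g) := by
  constructor
  · -- `f ≤_sW f′`
    refine ⟨fun q => Part.some q, fun p => Part.some (fun m => p m.unpair.2), idBC, ctBC, ?_⟩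
    intro G' hG' p x hx hne
    have hx' : x ∈ (jumpRep δX).δ (fun m => p m.unpair.2) :=
      Part.mem_bind_iff.mpr ⟨p, ct_mem_limP p, hx⟩
    obtain ⟨q, hqG, y, hy, hyf⟩ := hG' _ x hx' hne
    refine ⟨q, ?_, y, hy, hyf⟩
    exact Part.mem_bind_iff.mpr ⟨_, Part.mem_some _,
      Part.mem_bind_iff.mpr ⟨q, hqG, Part.mem_some _⟩⟩
  · rintro ⟨H, K, hH, ⟨ψK, hψc, hψm, hψv⟩, hmain⟩
    refine ⟨H, fun p' => Part.some (KjF ψK p'), hH, KjBC hψc, ?_⟩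
    intro G' hG' p' x hx' hne
    obtain ⟨p, hpl, hx⟩ := Part.mem_bind_iff.mp hx'
    -- step 1: locate the name `r` produced by `K` and the point `z` it names
    obtain ⟨q1, hq1, -⟩ := hmain (canonG δZ δW g) (canonG_realizes δZ δW g) p x hx hne
    obtain ⟨r, hrK, hq1b⟩ := Part.mem_bind_iff.mp hq1
    obtain ⟨t, ht, -⟩ := Part.mem_bind_iff.mp hq1b
    obtain ⟨z, hzr, hgz⟩ : ∃ z ∈ δZ.δ r, (g z).Nonempty := (Part.mem_mk_iff.mp ht).1
    -- step 2: `KjF ψK p'` is a jump-name of `z`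
    have hKl : r ∈ limP (KjF ψK p') :=
      mem_limP (Kj_lim hψm (limP_spec hpl) (hψv p r hrK))
    have hz' : z ∈ (jumpRep δZ).δ (KjF ψK p') := Part.mem_bind_iff.mpr ⟨r, hKl, hzr⟩
    obtain ⟨q₀, hq₀, w, hwq, hwg⟩ := hG' _ z hz' hgz
    -- step 3: a modified realizer that outputs `q₀` on the name `r`
    classical
    set G₁ : (ℕ → ℕ) →. (ℕ → ℕ) :=
      fun s => if s = r then Part.some q₀ else canonG δZ δW g s with hG₁def
    have hG₁ : Realizes δZ δW g G₁ := by
      intro s z2 hz2 hne2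
      by_cases hs : s = r
      · subst hs
        have hzz : z2 = z := Part.mem_unique hz2 hzr
        subst hzz
        exact ⟨q₀, by rw [hG₁def]; simp, w, hwq, hwg⟩
      · obtain ⟨q2, hq2, y2, hy2⟩ := canonG_realizes δZ δW g s z2 hz2 hne2
        refine ⟨q2, ?_, y2, hy2⟩
        rw [hG₁def]
        simpa [hs] using hq2
    obtain ⟨q, hq, y, hy, hyf⟩ := hmain G₁ hG₁ p x hx hne
    obtain ⟨r2, hr2, hq2⟩ := Part.mem_bind_iff.mp hq
    have hr2r : r2 = r := Part.mem_unique hr2 hrK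
    subst hr2r
    obtain ⟨t2, ht2, hqH⟩ := Part.mem_bind_iff.mp hq2
    have ht2q : t2 = q₀ := by
      rw [hG₁def] at ht2
      simpa using ht2
    refine ⟨q, ?_, y, hy, hyf⟩
    exact Part.mem_bind_iff.mpr ⟨KjF ψK p', Part.mem_some _,
      Part.mem_bind_iff.mpr ⟨q₀, hq₀, ht2q ▸ hqH⟩⟩
end

section
/- Strong Weihrauch reducibility respects cardinality: if f ≤_sW g then #f ≤ #g, where #f is the maximal cardinality of a set M ⊆ dom(f) such that {f(x) : x ∈ M} consists of pairwise disjoint sets (assuming these cardinalities exist). -/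
open scoped Classical

/-- strong Weihrauch reducibility respects cardinality. -/
theorem swred_card (X Y Z W : Type) (δX : RepSp X) (δY : RepSp Y)
    (δZ : RepSp Z) (δW : RepSp W) (f : X → Set Y) (g : Z → Set W)
    (h : SWRed δX δY δZ δW f g) :
    problemCard f ≤ problemCard g := by
  obtain ⟨H, K, -, -, hred⟩ := h
  set G0 : (ℕ → ℕ) →. (ℕ → ℕ) :=
    fun r => (δZ.δ r).bind fun z =>
      Part.mk (g z).Nonempty (fun h => (δW.surj h.choose).choose) with hG0def
  have hG0 : Realizes δZ δW g G0 := by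
    intro r z hz hne
    exact ⟨(δW.surj hne.choose).choose,
      Part.mem_bind_iff.mpr ⟨z, hz, mem_part_mk hne rfl⟩,
      hne.choose, (δW.surj hne.choose).choose_spec, hne.choose_spec⟩
  have key : ∀ M : Set X, (∀ x ∈ M, (f x).Nonempty) → M.PairwiseDisjoint f →
      Cardinal.mk M ≤ problemCard g := by
    intro M hM1 hM2
    have hex : ∀ x : M, ∃ z r, r ∈ K (δX.surj (x : X)).choose ∧ z ∈ δZ.δ r ∧
        (g z).Nonempty := by
      intro x
      obtain ⟨q, hq, y, hy, hyf⟩ := hred G0 hG0 (δX.surj (x : X)).choose x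
        (δX.surj (x : X)).choose_spec (hM1 x x.2)
      obtain ⟨r, hr, hq2⟩ := Part.mem_bind_iff.mp hq
      obtain ⟨s, hs, hq3⟩ := Part.mem_bind_iff.mp hq2
      obtain ⟨z, hz, hsz⟩ := Part.mem_bind_iff.mp hs
      exact ⟨z, r, hr, hz, (Part.mem_mk_iff.mp hsz).1⟩
    choose φ ρ hρ hφz hφne using hex
    have hdisj : ∀ x₁ x₂ : M, (x₁ : X) ≠ (x₂ : X) →
        Disjoint (g (φ x₁)) (g (φ x₂)) := by
      intro x₁ x₂ hne
      by_contra hnd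
      obtain ⟨w, hw₁, hw₂⟩ := Set.not_disjoint_iff.mp hnd
      obtain ⟨qw, hqw⟩ := δW.surj w
      set G1 : (ℕ → ℕ) →. (ℕ → ℕ) :=
        fun r => (δZ.δ r).bind fun z =>
          Part.mk (g z).Nonempty
            (fun h => if w ∈ g z then qw else (δW.surj h.choose).choose) with hG1def
      have hG1 : Realizes δZ δW g G1 := by
        intro r z hz hzne
        by_cases hwz : w ∈ g z
        · exact ⟨qw, Part.mem_bind_iff.mpr ⟨z, hz, mem_part_mk hzne (if_pos hwz)⟩,
            w, hqw, hwz⟩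
        · exact ⟨(δW.surj hzne.choose).choose,
            Part.mem_bind_iff.mpr ⟨z, hz, mem_part_mk hzne (if_neg hwz)⟩,
            hzne.choose, (δW.surj hzne.choose).choose_spec, hzne.choose_spec⟩
      have step : ∀ x : M, w ∈ g (φ x) → ∃ q ∈ H qw, ∃ y ∈ δY.δ q, y ∈ f x := by
        intro x hwx
        obtain ⟨q, hq, y, hy, hyf⟩ := hred G1 hG1 (δX.surj (x : X)).choose x
          (δX.surj (x : X)).choose_spec (hM1 x x.2)
        obtain ⟨r, hr, hq2⟩ := Part.mem_bind_iff.mp hq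
        obtain ⟨s, hs, hq3⟩ := Part.mem_bind_iff.mp hq2
        have hrr : r = ρ x := Part.mem_unique hr (hρ x)
        subst hrr
        obtain ⟨z, hz, hsz⟩ := Part.mem_bind_iff.mp hs
        have hzz : z = φ x := Part.mem_unique hz (hφz x)
        subst hzz
        obtain ⟨hd, hse⟩ := Part.mem_mk_iff.mp hsz
        rw [if_pos hwx] at hse
        subst hse
        exact ⟨q, hq3, y, hy, hyf⟩
      obtain ⟨q₁, hq₁, y₁, hy₁, hyf₁⟩ := step x₁ hw₁
      obtain ⟨q₂, hq₂, y₂, hy₂, hyf₂⟩ := step x₂ hw₂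
      have hqq : q₁ = q₂ := Part.mem_unique hq₁ hq₂
      subst hqq
      have hyy : y₁ = y₂ := Part.mem_unique hy₁ hy₂
      subst hyy
      exact Set.disjoint_left.mp (hM2 x₁.2 x₂.2 hne) hyf₁ hyf₂
    have hinj : Function.Injective φ := by
      intro x₁ x₂ hφeq
      by_contra hne
      have hne' : (x₁ : X) ≠ (x₂ : X) := fun h => hne (Subtype.ext h)
      have hd := hdisj x₁ x₂ hne'
      rw [hφeq] at hd
      obtain ⟨w, hw⟩ := hφne x₂
      exact Set.disjoint_left.mp hd hw hw
    have hmem : Cardinal.mk (Set.range φ) ∈ {c | ∃ M' : Set Z,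
        (∀ z ∈ M', (g z).Nonempty) ∧ M'.PairwiseDisjoint g ∧ c = Cardinal.mk M'} := by
      refine ⟨Set.range φ, ?_, ?_, rfl⟩
      · rintro z ⟨x, rfl⟩; exact hφne x
      · rintro a ⟨x₁, rfl⟩ b ⟨x₂, rfl⟩ hab
        exact hdisj x₁ x₂ (fun h => hab (congrArg φ (Subtype.ext h)))
    have hbdd : BddAbove {c | ∃ M' : Set Z,
        (∀ z ∈ M', (g z).Nonempty) ∧ M'.PairwiseDisjoint g ∧ c = Cardinal.mk M'} := by
      refine ⟨Cardinal.mk Z, ?_⟩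
      rintro c ⟨M', -, -, rfl⟩
      exact Cardinal.mk_set_le M'
    calc Cardinal.mk M = Cardinal.mk (Set.range φ) := (Cardinal.mk_range_eq φ hinj).symm
      _ ≤ problemCard g := le_csSup hbdd hmem
  refine csSup_le ⟨Cardinal.mk (∅ : Set X), ∅, by simp, by simp, rfl⟩ ?_
  rintro c ⟨M, hM1, hM2, rfl⟩
  exact key M hM1 hM2
end
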